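/- The maximum diameter of a connected simple graph on N vertices with m edges (N-1 ≤ m ≤ C(N,2)) equals N - ⌊(1 + √(9 + 8m - 8N))/2⌋. -/

import Mathlib

/-- The diameter of a graph: the maximum pairwise shortest-path distance. -/
noncomputable def graphDiam {V : Type*} [Fintype V] (G : SimpleGraph V) : ℕ :=
  Finset.univ.sup fun u => Finset.univ.sup (G.dist u)

lemma dist_getVert_eq {V : Type*} (G : SimpleGraph V) {u v : V} (hc : G.Connected)
    (p : G.Walk u v) (hlen : p.length = G.dist u v) {i : ℕ} (hi : i ≤ p.length) :
    G.dist u (p.getVert i) = i := by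
  have hub : ∀ j : ℕ, j ≤ p.length → G.dist u (p.getVert j) ≤ j := by
    intro j hj
    induction j with
    | zero => simp
    | succ n ih =>
      have hadj : G.Adj (p.getVert n) (p.getVert (n+1)) :=
        p.adj_getVert_succ (by omega)
      have h1 : G.dist (p.getVert n) (p.getVert (n+1)) = 1 :=
        SimpleGraph.dist_eq_one_iff_adj.mpr hadj
      have h2 := hc.dist_triangle (u := u) (v := p.getVert n) (w := p.getVert (n+1))
      have := ih (by omega)
      omega
  have hlb : ∀ t : ℕ, t ≤ p.length → G.dist (p.getVert (p.length - t)) v ≤ t := by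
    intro t
    induction t with
    | zero => intro _; simp
    | succ n ih =>
      intro ht
      have hj : p.length - (n+1) + 1 = p.length - n := by omega
      have hadj : G.Adj (p.getVert (p.length - (n+1))) (p.getVert (p.length - (n+1) + 1)) :=
        p.adj_getVert_succ (by omega)
      rw [hj] at hadj
      have h1 : G.dist (p.getVert (p.length - (n+1))) (p.getVert (p.length - n)) = 1 :=
        SimpleGraph.dist_eq_one_iff_adj.mpr hadj
      have h2 := hc.dist_triangle (u := p.getVert (p.length - (n+1)))
        (v := p.getVert (p.length - n)) (w := v)
      have := ih (by omega)
      omega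
  have h3 := hlb (p.length - i) (by omega)
  rw [show p.length - (p.length - i) = i by omega] at h3
  have h4 := hc.dist_triangle (u := u) (v := p.getVert i) (w := v)
  have h5 := hub i hi
  omega

lemma edge_count_bound (N : ℕ) (G : SimpleGraph (Fin N)) (hc : G.Connected)
    {u v : Fin N} {k : ℕ} (hk2 : 2 ≤ k) (hdkv : G.dist u v = k)
    (hdiam : ∀ x : Fin N, G.dist u x ≤ k) :
    2 * G.edgeSet.ncard + k * (k-1) + 2 * ((N - k - 1) * (k - 2)) ≤ N * (N - 1) := by
  classical
  obtain ⟨p, hpath, hplen⟩ := SimpleGraph.Reachable.exists_path_of_dist (hc.preconnected u v)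
  rw [hdkv] at hplen
  have hkN : k < N := by
    have := hpath.length_lt
    simpa [hplen] using this
  set f : ℕ → Fin N := p.getVert with hf
  have hdf : ∀ i ≤ k, G.dist u (f i) = i := by
    intro i hi
    exact dist_getVert_eq G hc p (by omega) (by omega)
  set dd : Fin N → ℕ := G.dist u with hdd
  have hddk : ∀ x, dd x ≤ k := hdiam
  have hadjd : ∀ x y : Fin N, G.Adj x y → dd x ≤ dd y + 1 := by
    intro x y hxy
    have h1 : G.dist y x = 1 := SimpleGraph.dist_eq_one_iff_adj.mpr hxy.symm
    have h2 := hc.dist_triangle (u := u) (v := y) (w := x)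
    simp only [hdd]; omega
  set onP : Fin N → Prop := fun x => f (dd x) = x with honP
  have honPf : ∀ i ≤ k, onP (f i) := by
    intro i hi
    show f (dd (f i)) = f i
    rw [hdf i hi]
  set J : Fin N → Finset ℕ := fun x =>
    (Finset.range (k+1)).filter (fun i => i + 2 ≤ dd x ∨ (¬ onP x ∧ dd x + 2 ≤ i)) with hJ
  -- injection into complement edges
  have hinj : ∀ x ∈ (Finset.univ : Finset (Fin N)), ∀ i ∈ J x, ∀ y ∈ (Finset.univ : Finset (Fin N)),
      ∀ j ∈ J y, s(x, f i) = s(y, f j) → (⟨x, i⟩ : (_ : Fin N) × ℕ) = ⟨y, j⟩ := by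
    intro x _ i hi y _ j hj heq
    simp only [hJ, Finset.mem_filter, Finset.mem_range] at hi hj
    rw [Sym2.eq_iff] at heq
    rcases heq with ⟨hxy, hij⟩ | ⟨hxj, hyi⟩
    · subst hxy
      have : i = j := by
        have h1 := hdf i (by omega)
        have h2 := hdf j (by omega)
        rw [hij] at h1; omega
      simp [this]
    · exfalso
      have hdx : dd x = j := by rw [hxj]; exact hdf j (by omega)
      have hdy : dd y = i := by rw [← hyi]; exact hdf i (by omega)
      have hox : onP x := by rw [hxj]; exact honPf j (by omega)
      have hoy : onP y := by rw [← hyi]; exact honPf i (by omega)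
      rcases hi.2 with h | h
      · rcases hj.2 with h' | h' <;> omega
      · exact h.1 hox
  have hnonedge : ∀ x : Fin N, ∀ i ∈ J x, s(x, f i) ∈ Gᶜ.edgeFinset := by
    intro x i hi
    simp only [hJ, Finset.mem_filter, Finset.mem_range] at hi
    have hdfi : dd (f i) = i := hdf i (by omega)
    have hne : x ≠ f i := by
      intro h; rw [← h] at hdfi; omega
    have hnadj : ¬ G.Adj x (f i) := by
      intro h
      have h1 := hadjd x (f i) h
      have h2 := hadjd (f i) x h.symm
      omega
    rw [SimpleGraph.mem_edgeFinset, SimpleGraph.mem_edgeSet, SimpleGraph.compl_adj]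
    exact ⟨hne, hnadj⟩
  have hcard1 : ∑ x : Fin N, (J x).card ≤ Gᶜ.edgeFinset.card := by
    rw [← Finset.card_sigma]
    apply Finset.card_le_card_of_injOn (fun q => s(q.1, f q.2))
    · rintro ⟨x, i⟩ hq
      rw [Finset.mem_coe, Finset.mem_sigma] at hq
      exact hnonedge x i hq.2
    · rintro ⟨x, i⟩ hq ⟨y, j⟩ hq' heq
      rw [Finset.mem_coe, Finset.mem_sigma] at hq hq'
      exact hinj x hq.1 i hq.2 y hq'.1 j hq'.2 heq
  
  have hfinj : ∀ a ∈ Finset.range (k+1), ∀ b ∈ Finset.range (k+1), f a = f b → a = b := by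
    intro a ha b hb hab
    rw [Finset.mem_range] at ha hb
    have h1 := hdf a (by omega)
    have h2 := hdf b (by omega)
    rw [hab] at h1; omega
  have honPset : Finset.univ.filter onP = (Finset.range (k+1)).image f := by
    ext x
    simp only [Finset.mem_filter, Finset.mem_image, Finset.mem_range, Finset.mem_univ, true_and]
    constructor
    · intro hx
      exact ⟨dd x, by have := hddk x; omega, hx⟩
    · rintro ⟨j, hj, rfl⟩
      exact honPf j (by omega)
  have hcard_on : (Finset.univ.filter onP).card = k + 1 := by
    rw [honPset, Finset.card_image_of_injOn, Finset.card_range]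
    intro a ha b hb
    exact hfinj a (by simpa using ha) b (by simpa using hb)
  have hsum_on : ∑ j ∈ Finset.range (k+1), (j - 1) ≤ ∑ x ∈ Finset.univ.filter onP, (J x).card := by
    rw [honPset, Finset.sum_image (fun a ha b hb => hfinj a ha b hb)]
    apply Finset.sum_le_sum
    intro j hj
    rw [Finset.mem_range] at hj
    have hdfj := hdf j (by omega)
    calc j - 1 = (Finset.range (j-1)).card := (Finset.card_range _).symm
      _ ≤ (J (f j)).card := by
          apply Finset.card_le_card
          intro i hi
          rw [Finset.mem_range] at hi
          simp only [hJ, Finset.mem_filter, Finset.mem_range, hdfj]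
          exact ⟨by omega, Or.inl (by omega)⟩
  have hJoff : ∀ x : Fin N, ¬ onP x → k - 2 ≤ (J x).card := by
    intro x hx
    have hss : (Finset.range (k+1)) \ {dd x - 1, dd x, dd x + 1} ⊆ J x := by
      intro i hi
      rw [Finset.mem_sdiff] at hi
      simp only [Finset.mem_insert, Finset.mem_singleton, not_or] at hi
      rw [Finset.mem_range] at hi
      simp only [hJ, Finset.mem_filter, Finset.mem_range]
      refine ⟨hi.1, ?_⟩
      by_cases hc2 : i + 2 ≤ dd x
      · exact Or.inl hc2
      · exact Or.inr ⟨hx, by omega⟩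
    have h1 := Finset.card_le_card hss
    have h2 := Finset.le_card_sdiff ({dd x - 1, dd x, dd x + 1} : Finset ℕ) (Finset.range (k+1))
    have h3 : ({dd x - 1, dd x, dd x + 1} : Finset ℕ).card ≤ 3 := by
      apply le_trans (Finset.card_insert_le _ _)
      have := Finset.card_insert_le (dd x) ({dd x + 1} : Finset ℕ)
      simp only [Finset.card_singleton] at this ⊢
      omega
    rw [Finset.card_range] at h2
    omega
  have hcard_off : (Finset.univ.filter (fun x => ¬ onP x)).card = N - (k+1) := by
    have h1 := Finset.card_filter_add_card_filter_not
      (s := (Finset.univ : Finset (Fin N))) (p := onP)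
    rw [hcard_on, Finset.card_univ, Fintype.card_fin] at h1
    omega
  have hsum_off : (N - (k+1)) * (k-2) ≤
      ∑ x ∈ Finset.univ.filter (fun x => ¬ onP x), (J x).card := by
    calc (N-(k+1))*(k-2) = ∑ _x ∈ Finset.univ.filter (fun x => ¬ onP x), (k-2) := by
          rw [Finset.sum_const, hcard_off, smul_eq_mul]
      _ ≤ _ := Finset.sum_le_sum (fun x hx => hJoff x (by simpa using (Finset.mem_filter.mp hx).2))
  have hsum_total : ∑ j ∈ Finset.range (k+1), (j-1) + (N-(k+1))*(k-2) ≤ ∑ x : Fin N, (J x).card := by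
    rw [← Finset.sum_filter_add_sum_filter_not Finset.univ onP]
    exact Nat.add_le_add hsum_on hsum_off
  have hgauss : (∑ j ∈ Finset.range (k+1), (j-1)) * 2 = k*(k-1) := by
    have he : ∑ j ∈ Finset.range (k+1), (j-1) = ∑ j ∈ Finset.range k, j := by
      rw [Finset.sum_range_succ']
      simp
    rw [he, Finset.sum_range_id_mul_two]
  have hchoose2 : ∀ n : ℕ, 2 * n.choose 2 = n * (n-1) := by
    intro n
    cases n with
    | zero => rfl
    | succ a =>
      rw [Nat.choose_two_right, Nat.succ_sub_one, Nat.mul_div_cancel'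
        (by rw [Nat.mul_comm]; exact (Nat.even_mul_succ_self a).two_dvd)]
  have hcompl : G.edgeSet.ncard + Gᶜ.edgeSet.ncard = N.choose 2 := by
    have hdisj : Disjoint G.edgeSet Gᶜ.edgeSet :=
      SimpleGraph.disjoint_edgeSet.mpr disjoint_compl_right
    have h3 : (⊤ : SimpleGraph (Fin N)).edgeSet.ncard = G.edgeSet.ncard + Gᶜ.edgeSet.ncard := by
      rw [← sup_compl_eq_top (x := G), SimpleGraph.edgeSet_sup,
        Set.ncard_union_eq hdisj (Set.toFinite _) (Set.toFinite _)]
    rw [← h3, Set.ncard_eq_toFinset_card']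
    have h4 : ((⊤ : SimpleGraph (Fin N)).edgeSet).toFinset = (⊤ : SimpleGraph (Fin N)).edgeFinset := rfl
    rw [h4, SimpleGraph.card_edgeFinset_top_eq_card_choose_two, Fintype.card_fin]
  have hncard : Gᶜ.edgeSet.ncard = Gᶜ.edgeFinset.card := by
    rw [SimpleGraph.edgeFinset, Set.ncard_eq_toFinset_card']
  have hNk1 : N - (k+1) = N - k - 1 := by omega
  rw [hNk1] at hsum_total
  linarith [hcard1, hsum_total, hgauss, hchoose2 N, hcompl, hncard]

lemma two_mul_choose_two (n : ℕ) : 2 * n.choose 2 = n * (n-1) := by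
  cases n with
  | zero => rfl
  | succ a =>
    rw [Nat.choose_two_right, Nat.succ_sub_one, Nat.mul_div_cancel'
      (by rw [Nat.mul_comm]; exact (Nat.even_mul_succ_self a).two_dvd)]

lemma aux_D_pos (N m s : ℕ) (hN : 2 ≤ N) (h2m : 2*m ≤ N*(N-1))
    (hsq : s * s ≤ 9+8*m-8*N) (ha : (9+8*m-8*N) + 8*N = 9+8*m) :
    1 ≤ N - (1+s)/2 := by
  rcases Nat.lt_or_ge s (2*N-1) with h | h
  · omega
  · exfalso
    have h1 : (2*N-1) * (2*N-1) ≤ s * s := Nat.mul_le_mul h h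
    have h2 : (2*N-1) * (2*N-1) + 8*N ≤ 9 + 8*m := by omega
    obtain ⟨n2, rfl⟩ : ∃ n2, N = n2 + 2 := ⟨N-2, by omega⟩
    have e0 : 2*(n2+2)-1 = 2*n2+3 := by omega
    have e0' : n2+2-1 = n2+1 := by omega
    rw [e0] at h2
    rw [e0'] at h2m
    nlinarith

lemma aux_contra (N m s k : ℕ) (hk2 : 2 ≤ k) (hkN : k < N)
    (hbound : 2 * m + k * (k - 1) + 2 * ((N - k - 1) * (k - 2)) ≤ N * (N - 1))
    (hsqP : (2*(N-k)+1) * (2*(N-k)+1) ≤ 9+8*m-8*N)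
    (ha : (9+8*m-8*N) + 8*N = 9+8*m) : False := by
  obtain ⟨k2, rfl⟩ : ∃ k2, k = k2 + 2 := ⟨k-2, by omega⟩
  obtain ⟨p1, hNe⟩ : ∃ p1, N = (k2+2) + (p1+1) := ⟨N-k2-3, by omega⟩
  subst hNe
  have e1 : (k2+2) + (p1+1) - (k2+2) - 1 = p1 := by omega
  have e2 : k2 + 2 - 2 = k2 := by omega
  have e3 : k2 + 2 - 1 = k2 + 1 := by omega
  have e4 : (k2+2) + (p1+1) - 1 = k2 + p1 + 2 := by omega
  have e5 : (k2+2) + (p1+1) - (k2+2) = p1 + 1 := by omega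
  rw [e1, e2, e3, e4] at hbound
  rw [e5] at hsqP
  have hsqP' : (2*(p1+1)+1) * (2*(p1+1)+1) + 8*((k2+2)+(p1+1)) ≤ 9 + 8*m := by omega
  nlinarith [hbound, hsqP']

lemma diam_le (N m : ℕ) (hN : 2 ≤ N) (hm1 : N - 1 ≤ m) (hm2 : m ≤ N.choose 2)
    (G : SimpleGraph (Fin N)) (hc : G.Connected) (hme : G.edgeSet.ncard = m) :
    graphDiam G ≤ N - (1 + Nat.sqrt (9 + 8 * m - 8 * N)) / 2 := by
  set s := Nat.sqrt (9 + 8*m - 8*N) with hs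
  have h2m : 2 * m ≤ N * (N-1) := by
    have := two_mul_choose_two N
    omega
  have ha : (9+8*m-8*N) + 8*N = 9+8*m := by omega
  have hsq : s * s ≤ 9+8*m-8*N := by
    have := Nat.sqrt_le' (9+8*m-8*N); rwa [pow_two] at this
  by_contra hcon
  push_neg at hcon
  set k := graphDiam G with hk
  have hne : (Finset.univ : Finset (Fin N)).Nonempty :=
    ⟨⟨0, by omega⟩, Finset.mem_univ _⟩
  obtain ⟨u, _, hu⟩ := Finset.exists_mem_eq_sup Finset.univ hne
    (fun u => Finset.univ.sup (G.dist u))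
  obtain ⟨v, _, hv⟩ := Finset.exists_mem_eq_sup Finset.univ hne (G.dist u)
  have hdkv : G.dist u v = k := by rw [hk, graphDiam, hu, hv]
  have hdiam : ∀ x : Fin N, G.dist u x ≤ k := by
    intro x
    rw [hk, graphDiam, hu, hv, ← hv]
    exact Finset.le_sup (Finset.mem_univ x)
  have hD1 : 1 ≤ N - (1+s)/2 := aux_D_pos N m s hN h2m hsq ha
  have hk2 : 2 ≤ k := by omega
  have hkN : k < N := by
    obtain ⟨p, hpath, hplen⟩ := SimpleGraph.Reachable.exists_path_of_dist (hc.preconnected u v)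
    have := hpath.length_lt
    rw [hplen, hdkv, Fintype.card_fin] at this
    exact this
  have hbound := edge_count_bound N G hc hk2 hdkv hdiam
  rw [hme] at hbound
  have hs2P : 2*(N-k)+1 ≤ s := by omega
  exact aux_contra N m s k hk2 hkN hbound
    (le_trans (Nat.mul_le_mul hs2P hs2P) hsq) ha


def lolR (D E a b : ℕ) : Prop :=
  (D-1 ≤ a ∧ D-1 ≤ b ∧ a ≠ b) ∨ (b = a+1 ∧ b ≤ D-1) ∨ (a+2 = D ∧ D ≤ b ∧ b < D+E)

instance (D E a b : ℕ) : Decidable (lolR D E a b) := by unfold lolR; infer_instance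

def lolG (N D E : ℕ) : SimpleGraph (Fin N) where
  Adj x y := lolR D E x.val y.val ∨ lolR D E y.val x.val
  symm := by constructor; intro x y h; tauto
  loopless := by constructor; intro x h; unfold lolR at h; omega

instance (N D E : ℕ) : DecidableRel (lolG N D E).Adj := fun x y => by
  unfold lolG; infer_instance

lemma lol_adj_iff {N D E : ℕ} (x y : Fin N) :
    (lolG N D E).Adj x y ↔ lolR D E x.val y.val ∨ lolR D E y.val x.val := Iff.rfl

lemma lol_conn {N D E : ℕ} (hD : 1 ≤ D) (hDN : D + 1 ≤ N) : (lolG N D E).Connected := by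
  have hN : 0 < N := by omega
  rw [SimpleGraph.connected_iff]
  have key : ∀ n : ℕ, ∀ x : Fin N, x.val = n → (lolG N D E).Reachable x ⟨0, hN⟩ := by
    intro n
    induction n using Nat.strong_induction_on with
    | _ n ih =>
      intro x hx
      rcases Nat.eq_zero_or_pos n with h0 | hpos
      · have : x = ⟨0, hN⟩ := by apply Fin.ext; simp [hx, h0]
        rw [this]
      · rcases Nat.lt_or_ge n D with hnD | hnD
        · -- path step down
          have hlt : n - 1 < N := by omega
          have hadj : (lolG N D E).Adj x ⟨n-1, hlt⟩ := by
            rw [lol_adj_iff]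
            exact Or.inr (Or.inr (Or.inl ⟨by simp [hx]; omega, by simp [hx]; omega⟩))
          exact hadj.reachable.trans (ih (n-1) (by omega) _ rfl)
        · -- clique step to D-1
          have hlt : D - 1 < N := by omega
          have hadj : (lolG N D E).Adj x ⟨D-1, hlt⟩ := by
            rw [lol_adj_iff]
            exact Or.inl (Or.inl ⟨by simp [hx]; omega, by simp, by simp [hx]; omega⟩)
          exact hadj.reachable.trans (ih (D-1) (by omega) _ rfl)
  constructor
  · intro x y
    exact (key x.val x rfl).trans (key y.val y rfl).symm
  · exact ⟨⟨0, hN⟩⟩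

lemma walk_potential {V : Type*} {G : SimpleGraph V} (φ : V → ℕ)
    (hφ : ∀ x y, G.Adj x y → φ x ≤ φ y + 1) {u v : V} (p : G.Walk u v) :
    φ u ≤ φ v + p.length := by
  induction p with
  | nil => simp
  | cons h q ih =>
    have := hφ _ _ h
    simp only [SimpleGraph.Walk.length_cons]
    omega

lemma lol_dist_lb {N D E : ℕ} (hN : 2 ≤ N) (hD : 1 ≤ D) (hDN : D + 1 ≤ N)
    (hE : E ≤ N - D - 1) :
    D ≤ (lolG N D E).dist ⟨0, by omega⟩ ⟨N-1, by omega⟩ := by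
  set G := lolG N D E with hG
  set φ : Fin N → ℕ := fun x => min x.val (D-1) + (if x.val = N-1 then 1 else 0) with hφdef
  have hφ : ∀ x y : Fin N, G.Adj x y → φ x ≤ φ y + 1 := by
    intro x y hadj
    rw [hG, lol_adj_iff] at hadj
    simp only [hφdef]
    have hxN : x.val < N := x.isLt
    have hyN : y.val < N := y.isLt
    unfold lolR at hadj
    split_ifs <;> omega
  have hreach : G.Reachable ⟨0, by omega⟩ ⟨N-1, by omega⟩ :=
    (lol_conn hD hDN).preconnected _ _
  obtain ⟨p, hp⟩ := hreach.exists_walk_length_eq_dist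
  have h1 := walk_potential φ hφ p.reverse
  rw [SimpleGraph.Walk.length_reverse, hp] at h1
  simp only [hφdef] at h1
  have e1 : min (N-1) (D-1) = D-1 := by omega
  have e2 : min 0 (D-1) = 0 := by omega
  rw [e1, e2] at h1
  simp at h1
  have hne : (0 : ℕ) ≠ N - 1 := by omega
  rw [if_neg hne] at h1
  omega


lemma lol_edge_count {N D E : ℕ} (hN : 2 ≤ N) (hD : 1 ≤ D) (hDN : D+1 ≤ N)
    (hE : E ≤ N - D - 1) (hDE : 1 ≤ E → 2 ≤ D) :
    (lolG N D E).edgeSet.ncard = (N-D+1).choose 2 + (D-1) + E := by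
  set G := lolG N D E with hG
  have hiff : ∀ p : Fin N × Fin N, G.Adj p.1 p.2 ↔
      ((D-1 ≤ p.1.val ∧ D-1 ≤ p.2.val ∧ p.1.val ≠ p.2.val) ∨
      ((p.2.val = p.1.val + 1 ∧ p.2.val ≤ D-1) ∨
      ((p.1.val = p.2.val + 1 ∧ p.1.val ≤ D-1) ∨
      ((p.1.val + 2 = D ∧ D ≤ p.2.val ∧ p.2.val < D+E) ∨
      (p.2.val + 2 = D ∧ D ≤ p.1.val ∧ p.1.val < D+E))))) := by
    intro p
    rw [hG, lol_adj_iff]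
    unfold lolR
    constructor
    · intro h; omega
    · intro h; omega
  have h2m : 2 * G.edgeFinset.card =
      (Finset.univ.filter fun p : Fin N × Fin N => G.Adj p.1 p.2).card := by
    rw [SimpleGraph.two_mul_card_edgeFinset]
  rw [Finset.filter_congr (fun p _ => by rw [hiff p]), Finset.filter_or, Finset.filter_or,
    Finset.filter_or, Finset.filter_or] at h2m
  set T1 := Finset.univ.filter (fun p : Fin N × Fin N =>
    D-1 ≤ p.1.val ∧ D-1 ≤ p.2.val ∧ p.1.val ≠ p.2.val) with hT1def
  set T2 := Finset.univ.filter (fun p : Fin N × Fin N =>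
    p.2.val = p.1.val + 1 ∧ p.2.val ≤ D-1) with hT2def
  set T3 := Finset.univ.filter (fun p : Fin N × Fin N =>
    p.1.val = p.2.val + 1 ∧ p.1.val ≤ D-1) with hT3def
  set T4 := Finset.univ.filter (fun p : Fin N × Fin N =>
    p.1.val + 2 = D ∧ D ≤ p.2.val ∧ p.2.val < D+E) with hT4def
  set T5 := Finset.univ.filter (fun p : Fin N × Fin N =>
    p.2.val + 2 = D ∧ D ≤ p.1.val ∧ p.1.val < D+E) with hT5def
  -- cardinalities
  have hKcard : (Finset.univ.filter (fun x : Fin N => D-1 ≤ x.val)).card = N - (D-1) := by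
    rw [← Nat.card_Ico (D-1) N]
    apply Finset.card_nbij (fun x => x.val)
    · intro x hx
      rw [Finset.mem_coe, Finset.mem_filter] at hx
      rw [Finset.mem_coe, Finset.mem_Ico]
      exact ⟨hx.2, x.isLt⟩
    · intro x _ y _ h
      exact Fin.val_injective h
    · intro b hb
      rw [Finset.coe_Ico, Set.mem_Ico] at hb
      refine ⟨⟨b, hb.2⟩, ?_, rfl⟩
      simp only [Finset.mem_coe, Finset.mem_filter, Finset.mem_univ, true_and]
      exact hb.1
  have hc1 : T1.card = (N-(D-1)) * (N-(D-1)) - (N-(D-1)) := by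
    have : T1 = (Finset.univ.filter (fun x : Fin N => D-1 ≤ x.val)).offDiag := by
      ext p
      simp only [hT1def, Finset.mem_filter, Finset.mem_offDiag, Finset.mem_univ, true_and]
      constructor
      · rintro ⟨h1, h2, h3⟩
        exact ⟨h1, h2, fun h => h3 (by rw [h])⟩
      · rintro ⟨h1, h2, h3⟩
        exact ⟨h1, h2, fun h => h3 (Fin.val_injective h)⟩
    rw [this, Finset.offDiag_card, hKcard]
  have hc2 : T2.card = D - 1 := by
    rw [← Finset.card_range (D-1)]
    apply Finset.card_nbij (fun p => p.1.val)
    · intro p hp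
      simp only [Finset.mem_coe, hT2def, Finset.mem_filter] at hp
      rw [Finset.mem_coe, Finset.mem_range]
      beta_reduce
      omega
    · intro p hp q hq h
      rw [Finset.mem_coe, hT2def, Finset.mem_filter] at hp hq
      have : p.1 = q.1 := Fin.val_injective h
      have h2 : p.2 = q.2 := Fin.val_injective (by omega)
      exact Prod.ext this h2
    · intro b hb
      rw [Finset.coe_range, Set.mem_Iio] at hb
      refine ⟨(⟨b, by omega⟩, ⟨b+1, by omega⟩), ?_, rfl⟩
      simp only [Finset.mem_coe, hT2def, Finset.mem_filter, Finset.mem_univ, true_and]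
      omega
  have hc3 : T3.card = D - 1 := by
    rw [← Finset.card_range (D-1)]
    apply Finset.card_nbij (fun p => p.2.val)
    · intro p hp
      simp only [Finset.mem_coe, hT3def, Finset.mem_filter] at hp
      rw [Finset.mem_coe, Finset.mem_range]
      beta_reduce
      omega
    · intro p hp q hq h
      rw [Finset.mem_coe, hT3def, Finset.mem_filter] at hp hq
      have : p.2 = q.2 := Fin.val_injective h
      have h2 : p.1 = q.1 := Fin.val_injective (by omega)
      exact Prod.ext h2 this
    · intro b hb
      rw [Finset.coe_range, Set.mem_Iio] at hb
      refine ⟨(⟨b+1, by omega⟩, ⟨b, by omega⟩), ?_, rfl⟩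
      simp only [Finset.mem_coe, hT3def, Finset.mem_filter, Finset.mem_univ, true_and]
      omega
  have hc4 : T4.card = E := by
    rw [show E = (Finset.Ico D (D+E)).card by rw [Nat.card_Ico]; omega]
    apply Finset.card_nbij (fun p => p.2.val)
    · intro p hp
      simp only [Finset.mem_coe, hT4def, Finset.mem_filter] at hp
      rw [Finset.mem_coe, Finset.mem_Ico]
      beta_reduce
      omega
    · intro p hp q hq h
      rw [Finset.mem_coe, hT4def, Finset.mem_filter] at hp hq
      have h2 : p.2 = q.2 := Fin.val_injective h
      have h1 : p.1 = q.1 := Fin.val_injective (by omega)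
      exact Prod.ext h1 h2
    · intro b hb
      rw [Finset.coe_Ico, Set.mem_Ico] at hb
      have hD2 : 2 ≤ D := hDE (by omega)
      refine ⟨(⟨D-2, by omega⟩, ⟨b, by omega⟩), ?_, rfl⟩
      simp only [Finset.mem_coe, hT4def, Finset.mem_filter, Finset.mem_univ, true_and]
      omega
  have hc5 : T5.card = E := by
    rw [show E = (Finset.Ico D (D+E)).card by rw [Nat.card_Ico]; omega]
    apply Finset.card_nbij (fun p => p.1.val)
    · intro p hp
      simp only [Finset.mem_coe, hT5def, Finset.mem_filter] at hp
      rw [Finset.mem_coe, Finset.mem_Ico]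
      beta_reduce
      omega
    · intro p hp q hq h
      rw [Finset.mem_coe, hT5def, Finset.mem_filter] at hp hq
      have h1 : p.1 = q.1 := Fin.val_injective h
      have h2 : p.2 = q.2 := Fin.val_injective (by omega)
      exact Prod.ext h1 h2
    · intro b hb
      rw [Finset.coe_Ico, Set.mem_Ico] at hb
      have hD2 : 2 ≤ D := hDE (by omega)
      refine ⟨(⟨b, by omega⟩, ⟨D-2, by omega⟩), ?_, rfl⟩
      simp only [Finset.mem_coe, hT5def, Finset.mem_filter, Finset.mem_univ, true_and]
      omega
  -- disjointness
  have dis : ∀ (A B : Finset (Fin N × Fin N))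
      (PA PB : Fin N × Fin N → Prop) [DecidablePred PA] [DecidablePred PB],
      A = Finset.univ.filter PA → B = Finset.univ.filter PB →
      (∀ p, ¬ (PA p ∧ PB p)) → Disjoint A B := by
    intro A B PA PB _ _ hA hB hcon
    rw [hA, hB]
    rw [Finset.disjoint_left]
    intro p hp hq
    rw [Finset.mem_filter] at hp hq
    exact hcon p ⟨hp.2, hq.2⟩
  have d12 : Disjoint T1 T2 := dis _ _ _ _ hT1def hT2def (by intro p; omega)
  have d13 : Disjoint T1 T3 := dis _ _ _ _ hT1def hT3def (by intro p; omega)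
  have d14 : Disjoint T1 T4 := dis _ _ _ _ hT1def hT4def (by intro p; omega)
  have d15 : Disjoint T1 T5 := dis _ _ _ _ hT1def hT5def (by intro p; omega)
  have d23 : Disjoint T2 T3 := dis _ _ _ _ hT2def hT3def (by intro p; omega)
  have d24 : Disjoint T2 T4 := dis _ _ _ _ hT2def hT4def (by intro p; omega)
  have d25 : Disjoint T2 T5 := dis _ _ _ _ hT2def hT5def (by intro p; omega)
  have d34 : Disjoint T3 T4 := dis _ _ _ _ hT3def hT4def (by intro p; omega)
  have d35 : Disjoint T3 T5 := dis _ _ _ _ hT3def hT5def (by intro p; omega)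
  have d45 : Disjoint T4 T5 := dis _ _ _ _ hT4def hT5def (by intro p; omega)
  have hcard : (T1 ∪ (T2 ∪ (T3 ∪ (T4 ∪ T5)))).card =
      T1.card + (T2.card + (T3.card + (T4.card + T5.card))) := by
    rw [Finset.card_union_of_disjoint, Finset.card_union_of_disjoint,
      Finset.card_union_of_disjoint, Finset.card_union_of_disjoint d45]
    · exact Finset.disjoint_union_right.mpr ⟨d34, d35⟩
    · exact Finset.disjoint_union_right.mpr ⟨d23, Finset.disjoint_union_right.mpr ⟨d24, d25⟩⟩
    · exact Finset.disjoint_union_right.mpr ⟨d12,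
        Finset.disjoint_union_right.mpr ⟨d13, Finset.disjoint_union_right.mpr ⟨d14, d15⟩⟩⟩
  rw [hcard, hc1, hc2, hc3, hc4, hc5] at h2m
  have hncard : G.edgeSet.ncard = G.edgeFinset.card := by
    rw [SimpleGraph.edgeFinset, Set.ncard_eq_toFinset_card']
  set C := N - D + 1 with hC
  have hCd : N - (D-1) = C := by omega
  rw [hCd] at h2m
  have h2c := two_mul_choose_two C
  have hCC : C * C - C = C * (C-1) := by
    cases C with
    | zero => rfl
    | succ c =>
      have h : (c+1)*(c+1) = (c+1)*c + (c+1) := by ring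
      simp only [Nat.succ_sub_one]
      omega
  rw [hCC] at h2m
  rw [hncard]
  linarith [h2m, h2c]

/-- The maximum diameter of a connected simple graph on `N` vertices with `m` edges
(`N-1 ≤ m ≤ C(N,2)`) equals `N - ⌊(1 + √(9 + 8m - 8N))/2⌋`: this value is achieved and
is an upper bound. -/
theorem stmt_18 (N m : ℕ) (hN : 2 ≤ N) (hm1 : N - 1 ≤ m) (hm2 : m ≤ N.choose 2) :
    IsGreatest
      {k | ∃ G : SimpleGraph (Fin N), G.Connected ∧ G.edgeSet.ncard = m ∧ graphDiam G = k}
      (N - (1 + Nat.sqrt (9 + 8 * m - 8 * N)) / 2) := by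
  constructor
  · -- the lollipop graph achieves the value
    set s := Nat.sqrt (9 + 8 * m - 8 * N) with hs
    have h2m : 2 * m ≤ N * (N-1) := by
      have := two_mul_choose_two N
      omega
    have ha : (9+8*m-8*N) + 8*N = 9+8*m := by omega
    have hsq : s * s ≤ 9+8*m-8*N := by
      have := Nat.sqrt_le' (9+8*m-8*N); rwa [pow_two] at this
    have hsu : 9+8*m-8*N < (s+1)*(s+1) := by
      have := Nat.lt_succ_sqrt' (9+8*m-8*N)
      rwa [Nat.succ_eq_add_one, pow_two] at this
    set Q := (1+s)/2 with hQ
    have hs1 : 1 ≤ s := by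
      have h9 : 0 < 9+8*m-8*N := by omega
      exact Nat.sqrt_pos.mpr h9
    have hQ1 : 1 ≤ Q := by omega
    have hQN : Q ≤ N - 1 := by
      have := aux_D_pos N m s hN h2m hsq ha
      omega
    set t := m - (N-1) with ht
    have h8 : 9+8*m-8*N = 8*t+1 := by omega
    -- lower bound : Q.choose 2 ≤ t
    have hql : Q.choose 2 ≤ t := by
      obtain ⟨q, hq⟩ : ∃ q, Q = q + 1 := ⟨Q-1, by omega⟩
      have h1 : 2*q+1 ≤ s := by omega
      have h2 : (2*q+1)*(2*q+1) ≤ s*s := Nat.mul_le_mul h1 h1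
      have h3 : (2*q+1)*(2*q+1) = 4*((q+1)*q) + 1 := by ring
      have h4 : 2 * (Q.choose 2) = (q+1)*q := by
        rw [hq, two_mul_choose_two, Nat.succ_sub_one]
      omega
    -- upper bound : t < (Q+1).choose 2
    have hqu : t < (Q+1).choose 2 := by
      have h1 : s + 1 ≤ 2*Q + 1 := by omega
      have h2 : (s+1)*(s+1) ≤ (2*Q+1)*(2*Q+1) := Nat.mul_le_mul h1 h1
      have h3 : (2*Q+1)*(2*Q+1) = 4*((Q+1)*Q) + 1 := by ring
      have h4 : 2 * ((Q+1).choose 2) = (Q+1)*Q := by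
        rw [two_mul_choose_two, Nat.succ_sub_one]
      omega
    have hpascalQ : (Q+1).choose 2 = Q.choose 2 + Q := by
      rw [Nat.choose_succ_succ, Nat.choose_one_right, Nat.add_comm]
    set D := N - Q with hD
    set E := t - Q.choose 2 with hEdef
    have hD1 : 1 ≤ D := by omega
    have hDN : D + 1 ≤ N := by omega
    have hEb : E ≤ N - D - 1 := by omega
    have hDE : 1 ≤ E → 2 ≤ D := by
      intro hE1
      by_contra hcon
      have hDeq : D = 1 := by omega
      have hQeq : Q = N - 1 := by omega
      have hpascalN : N.choose 2 = (N-1).choose 2 + (N-1) := by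
        obtain ⟨n1, hn1⟩ : ∃ n1, N = n1 + 1 := ⟨N-1, by omega⟩
        rw [hn1, Nat.choose_succ_succ, Nat.choose_one_right, Nat.succ_sub_one, Nat.add_comm]
      rw [hQeq] at hEdef
      omega
    have hmeq : (N-D+1).choose 2 + (D-1) + E = m := by
      have harg : N - D + 1 = Q + 1 := by omega
      rw [harg, hpascalQ]
      omega
    refine ⟨lolG N D E, lol_conn hD1 hDN, ?_, ?_⟩
    · rw [lol_edge_count hN hD1 hDN hEb hDE, hmeq]
    · have hle : graphDiam (lolG N D E) ≤ N - (1+s)/2 :=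
        diam_le N m hN hm1 hm2 _ (lol_conn hD1 hDN)
          (by rw [lol_edge_count hN hD1 hDN hEb hDE, hmeq])
      have hge : D ≤ graphDiam (lolG N D E) := by
        refine le_trans (lol_dist_lb hN hD1 hDN hEb) ?_
        refine le_trans (Finset.le_sup (Finset.mem_univ (⟨N-1, by omega⟩ : Fin N))) ?_
        exact Finset.le_sup (f := fun u => Finset.univ.sup ((lolG N D E).dist u))
          (Finset.mem_univ (⟨0, by omega⟩ : Fin N))
      omega
  · rintro k ⟨G, hc, hme, rfl⟩
    exact diam_le N m hN hm1 hm2 G hc hme
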